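/- Let F be the CDF of the symmetric Pareto distribution with shape 2 and f its density (f(x) = 1/(|x|+1)^3). For all c ≥ 0, ∫_{-∞}^∞ (-f'(z+c)) · F(z) · F(z+c) dz ≥ F(-c) · ∫_{-∞}^∞ f(z)^2 dz, where f' denotes the derivative of f (taken piecewise off 0). -/

import Mathlib

open Real MeasureTheory Set Filter Topology

/-- Density of the symmetric Pareto distribution with shape 2. -/
noncomputable def sParetoPdf (x : ℝ) : ℝ := 1 / (|x| + 1) ^ 3

/-- Piecewise derivative (off 0) of the symmetric Pareto density with shape 2. -/
noncomputable def sParetoPdf' (x : ℝ) : ℝ :=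
  if x < 0 then 3 / (1 - x) ^ 4 else -3 / (x + 1) ^ 4

/-- CDF of the symmetric Pareto distribution with shape 2. -/
noncomputable def sParetoCdf (x : ℝ) : ℝ :=
  if x < 0 then 1 / (2 * (1 - x) ^ 2) else 1 - 1 / (2 * (x + 1) ^ 2)

lemma cdf_nonneg (x : ℝ) : 0 ≤ sParetoCdf x := by
  unfold sParetoCdf
  split_ifs with h
  · positivity
  · push_neg at h
    have h2 : (0:ℝ) < 2 * (x+1)^2 := by positivity
    have : 1/(2*(x+1)^2) ≤ 1/2 := by
      rw [div_le_div_iff₀ h2 (by norm_num)]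
      nlinarith
    linarith

lemma cdf_le_one (x : ℝ) : sParetoCdf x ≤ 1 := by
  unfold sParetoCdf
  split_ifs with h
  · have h2 : (0:ℝ) < 2 * (1-x)^2 := by nlinarith
    have : 1/(2*(1-x)^2) ≤ 1/2 := by
      rw [div_le_div_iff₀ h2 (by norm_num)]
      nlinarith
    linarith
  · push_neg at h
    have : (0:ℝ) ≤ 1/(2*(x+1)^2) := by positivity
    linarith

lemma cdf_mono : Monotone sParetoCdf := by
  intro a b hab
  unfold sParetoCdf
  split_ifs with ha hb hb
  · rw [div_le_div_iff₀ (by nlinarith) (by nlinarith)]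
    nlinarith
  · push_neg at hb
    have h1 : 1/(2*(1-a)^2) ≤ 1/2 := by
      rw [div_le_div_iff₀ (by nlinarith) (by norm_num)]; nlinarith
    have h2 : 1/(2*(b+1)^2) ≤ 1/2 := by
      rw [div_le_div_iff₀ (by nlinarith) (by norm_num)]; nlinarith
    linarith
  · push_neg at ha; linarith
  · push_neg at ha hb
    have : 1/(2*(b+1)^2) ≤ 1/(2*(a+1)^2) := by
      rw [div_le_div_iff₀ (by nlinarith) (by nlinarith)]
      nlinarith
    linarith

lemma meas_cdf : Measurable sParetoCdf := by
  unfold sParetoCdf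
  exact Measurable.ite measurableSet_Iio
    (measurable_const.div (((measurable_const.sub measurable_id).pow_const 2).const_mul 2))
    (measurable_const.sub
      (measurable_const.div (((measurable_id.add_const 1).pow_const 2).const_mul 2)))

lemma meas_pdf' : Measurable sParetoPdf' := by
  unfold sParetoPdf'
  exact Measurable.ite measurableSet_Iio
    (measurable_const.div ((measurable_const.sub measurable_id).pow_const 4))
    (measurable_const.div ((measurable_id.add_const 1).pow_const 4))

lemma pdf'_abs_le (x : ℝ) : |sParetoPdf' x| ≤ 3 * (1 + x^2)⁻¹ := by
  unfold sParetoPdf'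
  have hp : (0:ℝ) < 1 + x^2 := by positivity
  split_ifs with h
  · rw [abs_of_nonneg (by positivity)]
    have key : 1 + x^2 ≤ (1-x)^4 := by
      nlinarith [sq_nonneg x, mul_nonneg (neg_nonneg.2 h.le) (sq_nonneg x), sq_nonneg (x*x)]
    have h4 : (0:ℝ) < (1-x)^4 := by nlinarith
    calc 3/(1-x)^4 = 3 * ((1-x)^4)⁻¹ := by rw [div_eq_mul_inv]
      _ ≤ 3 * (1+x^2)⁻¹ := by
          gcongr
  · push_neg at h
    rw [show (-3:ℝ)/(x+1)^4 = -(3/(x+1)^4) by ring, abs_neg, abs_of_nonneg (by positivity)]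
    have key : 1 + x^2 ≤ (x+1)^4 := by
      nlinarith [sq_nonneg x, mul_nonneg h (sq_nonneg x), sq_nonneg (x*x)]
    calc 3/(x+1)^4 = 3 * ((x+1)^4)⁻¹ := by rw [div_eq_mul_inv]
      _ ≤ 3 * (1+x^2)⁻¹ := by
          gcongr

lemma intOn_Ioi (n : ℕ) : IntegrableOn (fun z : ℝ => (((z+1):ℝ)^(n+2))⁻¹) (Ioi 0) := by
  apply Integrable.mono' (integrable_inv_one_add_sq.restrict (s := Ioi 0))
  · exact ((measurable_id.add_const 1).pow_const (n+2)).inv.aestronglyMeasurable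
  · rw [ae_restrict_iff' measurableSet_Ioi]
    filter_upwards with z hz
    have h1 : (0:ℝ) < z := hz
    have hb : (1:ℝ) + z^2 ≤ (z+1)^(n+2) := by
      calc (1:ℝ) + z^2 ≤ (z+1)^2 := by nlinarith
        _ ≤ (z+1)^(n+2) := pow_le_pow_right₀ (by linarith) (by omega)
    rw [Real.norm_eq_abs, abs_of_nonneg (inv_nonneg.2 (pow_nonneg (by linarith) _))]
    exact inv_anti₀ (by positivity) hb

lemma intOn_Iic (n : ℕ) : IntegrableOn (fun z : ℝ => (((1-z):ℝ)^(n+2))⁻¹) (Iic 0) := by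
  apply Integrable.mono' (integrable_inv_one_add_sq.restrict (s := Iic 0))
  · exact ((measurable_const.sub measurable_id).pow_const (n+2)).inv.aestronglyMeasurable
  · rw [ae_restrict_iff' measurableSet_Iic]
    filter_upwards with z hz
    have h1 : z ≤ (0:ℝ) := hz
    have hb : (1:ℝ) + z^2 ≤ (1-z)^(n+2) := by
      calc (1:ℝ) + z^2 ≤ (1-z)^2 := by nlinarith
        _ ≤ (1-z)^(n+2) := pow_le_pow_right₀ (by linarith) (by omega)
    rw [Real.norm_eq_abs, abs_of_nonneg (inv_nonneg.2 (pow_nonneg (by linarith) _))]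
    exact inv_anti₀ (by positivity) hb

lemma intval_Ioi (n : ℕ) : ∫ z in Ioi (0:ℝ), (((z+1):ℝ)^(n+2))⁻¹ = 1/((n:ℝ)+1) := by
  have hd : ∀ x ∈ Ioi (0:ℝ), HasDerivAt (fun z : ℝ => -(1/((n:ℝ)+1)) * (((z+1):ℝ)^(n+1))⁻¹)
      ((((x+1):ℝ)^(n+2))⁻¹) x := by
    intro x hx
    have hx0 : (0:ℝ) < x := hx
    have hx1 : (0:ℝ) < x + 1 := by linarith
    have h1 : HasDerivAt (fun z : ℝ => z + 1) 1 x := (hasDerivAt_id x).add_const 1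
    have h2 := ((h1.fun_pow (n+1)).fun_inv (pow_ne_zero _ hx1.ne')).const_mul (-(1/((n:ℝ)+1)))
    refine h2.congr_deriv (Eq.symm ?_)
    have hne : (x+1 : ℝ) ≠ 0 := hx1.ne'
    have hcast : ((n:ℝ)+1) ≠ 0 := by positivity
    simp only [Nat.add_sub_cancel, Nat.cast_add, Nat.cast_one]
    field_simp
    ring
  have hcont : ContinuousWithinAt (fun z : ℝ => -(1/((n:ℝ)+1)) * (((z+1):ℝ)^(n+1))⁻¹)
      (Ici 0) 0 := by
    apply ContinuousAt.continuousWithinAt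
    have : ((0:ℝ)+1)^(n+1) ≠ 0 := by norm_num
    exact (continuousAt_const.mul (((continuousAt_id.add continuousAt_const).pow (n+1)).inv₀ this))
  have htend : Tendsto (fun z : ℝ => -(1/((n:ℝ)+1)) * (((z+1):ℝ)^(n+1))⁻¹) atTop (𝓝 0) := by
    have h1 : Tendsto (fun z : ℝ => ((z+1):ℝ)^(n+1)) atTop atTop :=
      (tendsto_pow_atTop (Nat.succ_ne_zero n)).comp (tendsto_atTop_add_const_right _ 1 tendsto_id)
    have h2 := h1.inv_tendsto_atTop
    simpa using h2.const_mul (-(1/((n:ℝ)+1)))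
  rw [integral_Ioi_of_hasDerivAt_of_tendsto hcont hd (intOn_Ioi n) htend]
  norm_num

lemma intval_Iic (n : ℕ) : ∫ z in Iic (0:ℝ), (((1-z):ℝ)^(n+2))⁻¹ = 1/((n:ℝ)+1) := by
  have h := integral_comp_neg_Ioi (0:ℝ) (fun z : ℝ => (((1-z):ℝ)^(n+2))⁻¹)
  rw [neg_zero] at h
  rw [← h]
  have : ∀ x : ℝ, (((1 - -x):ℝ)^(n+2))⁻¹ = (((x+1):ℝ)^(n+2))⁻¹ := by
    intro x; ring_nf
  simp_rw [this]
  exact intval_Ioi n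

lemma cont_pdf : Continuous sParetoPdf := by
  unfold sParetoPdf
  exact continuous_const.div ((continuous_abs.add continuous_const).pow 3)
    (fun x => by positivity)

lemma integrable_pdf_sq : Integrable (fun z : ℝ => (sParetoPdf z)^2) := by
  apply Integrable.mono' integrable_inv_one_add_sq
  · exact (cont_pdf.pow 2).aestronglyMeasurable
  · filter_upwards with z
    have h1 : (1:ℝ) + z^2 ≤ (|z|+1)^2 := by nlinarith [abs_nonneg z, sq_abs z]
    have h2 : ((|z|+1):ℝ)^2 ≤ (|z|+1)^6 :=
      pow_le_pow_right₀ (by linarith [abs_nonneg z]) (by norm_num)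
    rw [Real.norm_eq_abs, abs_of_nonneg (by positivity)]
    have he : (sParetoPdf z)^2 = (((|z|+1):ℝ)^6)⁻¹ := by
      unfold sParetoPdf; rw [div_pow, one_pow, ← pow_mul, one_div]
    rw [he]
    exact inv_anti₀ (by positivity) (le_trans h1 h2)

lemma integral_pdf_sq : ∫ z : ℝ, (sParetoPdf z)^2 = 2/5 := by
  have hsplit := intervalIntegral.integral_Iic_add_Ioi (μ := volume) (b := (0:ℝ))
    integrable_pdf_sq.integrableOn integrable_pdf_sq.integrableOn
  have h1 : ∫ z in Iic (0:ℝ), (sParetoPdf z)^2 = 1/5 := by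
    have heq : EqOn (fun z : ℝ => (sParetoPdf z)^2) (fun z : ℝ => (((1-z):ℝ)^6)⁻¹) (Iic 0) := by
      intro z hz
      have h0 : z ≤ (0:ℝ) := hz
      simp only [sParetoPdf, abs_of_nonpos h0]
      rw [div_pow, one_pow, ← pow_mul]
      norm_num
      ring_nf
    rw [setIntegral_congr_fun measurableSet_Iic heq]
    have := intval_Iic 4
    norm_num at this
    exact this
  have h2 : ∫ z in Ioi (0:ℝ), (sParetoPdf z)^2 = 1/5 := by
    have heq : EqOn (fun z : ℝ => (sParetoPdf z)^2) (fun z : ℝ => (((z+1):ℝ)^6)⁻¹) (Ioi 0) := by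
      intro z hz
      have h0 : (0:ℝ) < z := hz
      simp only [sParetoPdf, abs_of_pos h0]
      rw [div_pow, one_pow, ← pow_mul]
      norm_num
    rw [setIntegral_congr_fun measurableSet_Ioi heq]
    have := intval_Ioi 4
    norm_num at this
    exact this
  rw [← hsplit, h1, h2]
  norm_num

noncomputable def phi (u : ℝ) : ℝ := (-(sParetoPdf' u)) * sParetoCdf u

lemma integrable_phi : Integrable phi := by
  apply Integrable.mono' (integrable_inv_one_add_sq.const_mul 3)
  · exact (meas_pdf'.neg.mul meas_cdf).aestronglyMeasurable
  · filter_upwards with u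
    rw [Real.norm_eq_abs]
    unfold phi
    rw [abs_mul, abs_neg]
    have h1 := pdf'_abs_le u
    have h2 : |sParetoCdf u| ≤ 1 := abs_le.2 ⟨by linarith [cdf_nonneg u], cdf_le_one u⟩
    calc |sParetoPdf' u| * |sParetoCdf u| ≤ (3*(1+u^2)⁻¹) * 1 :=
          mul_le_mul h1 h2 (abs_nonneg _) (by positivity)
      _ = 3*(1+u^2)⁻¹ := mul_one _

lemma integral_phi : ∫ u : ℝ, phi u = 2/5 := by
  have hsplit := intervalIntegral.integral_Iic_add_Ioi (μ := volume) (b := (0:ℝ))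
    integrable_phi.integrableOn integrable_phi.integrableOn
  have h0 : ∀ᵐ (u:ℝ), u ≠ 0 := by
    rw [ae_iff]
    simp only [not_not]
    have : {a : ℝ | a = 0} = {0} := by ext a; simp
    rw [this]
    exact measure_singleton 0
  have h1 : ∫ u in Iic (0:ℝ), phi u = -(3/10) := by
    have hae : ∀ᵐ u : ℝ, u ∈ Iic (0:ℝ) → phi u = -(3/2) * (((1-u):ℝ)^6)⁻¹ := by
      filter_upwards [h0] with u hu hu'
      have hlt : u < 0 := lt_of_le_of_ne hu' hu
      unfold phi sParetoPdf' sParetoCdf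
      rw [if_pos hlt, if_pos hlt]
      have hne : (1:ℝ) - u ≠ 0 := by nlinarith
      field_simp
    rw [setIntegral_congr_ae measurableSet_Iic hae, integral_const_mul]
    have := intval_Iic 4
    norm_num at this
    rw [this]
    norm_num
  have h2 : ∫ u in Ioi (0:ℝ), phi u = 7/10 := by
    have heq : EqOn phi (fun u : ℝ => 3 * (((u+1):ℝ)^4)⁻¹ - (3/2) * (((u+1):ℝ)^6)⁻¹) (Ioi 0) := by
      intro u hu
      have hpos : (0:ℝ) < u := hu
      unfold phi sParetoPdf' sParetoCdf
      rw [if_neg (by linarith), if_neg (by linarith)]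
      have hne : (u:ℝ) + 1 ≠ 0 := by nlinarith
      field_simp
    rw [setIntegral_congr_fun measurableSet_Ioi heq]
    have hi2 := intval_Ioi 2
    have hi4 := intval_Ioi 4
    norm_num at hi2 hi4
    rw [integral_sub ((intOn_Ioi 2).const_mul 3) ((intOn_Ioi 4).const_mul (3/2))]
    have e2 : ∫ u in Ioi (0:ℝ), 3 * (((u+1):ℝ)^4)⁻¹ = 1 := by
      rw [integral_const_mul]
      have : (fun u : ℝ => (((u+1):ℝ)^4)⁻¹) = fun u : ℝ => (((u+1):ℝ)^(2+2))⁻¹ := by norm_num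
      rw [this, intval_Ioi 2]; norm_num
    have e4 : ∫ u in Ioi (0:ℝ), (3/2) * (((u+1):ℝ)^6)⁻¹ = 3/10 := by
      rw [integral_const_mul]
      have : (fun u : ℝ => (((u+1):ℝ)^6)⁻¹) = fun u : ℝ => (((u+1):ℝ)^(4+2))⁻¹ := by norm_num
      rw [this, intval_Ioi 4]; norm_num
    rw [e2, e4]
    norm_num
  rw [← hsplit, h1, h2]
  norm_num

theorem stmt6 (c : ℝ) (hc : 0 ≤ c) :
    sParetoCdf (-c) * (∫ z : ℝ, (sParetoPdf z) ^ 2) ≤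
      ∫ z : ℝ, (-(sParetoPdf' (z + c))) * sParetoCdf z * sParetoCdf (z + c) := by
  have hpt : ∀ z : ℝ, sParetoCdf (-c) * phi (z + c) ≤
      (-(sParetoPdf' (z + c))) * sParetoCdf z * sParetoCdf (z + c) := by
    intro z
    unfold phi
    have hB := cdf_nonneg (z + c)
    by_cases h : z + c < 0
    · have hA : -(sParetoPdf' (z+c)) ≤ 0 := by
        unfold sParetoPdf'
        rw [if_pos h]
        have : (0:ℝ) ≤ 3/(1-(z+c))^4 := by positivity
        linarith
      have hF : sParetoCdf z ≤ sParetoCdf (-c) := cdf_mono (by linarith)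
      have hAB : -(sParetoPdf' (z+c)) * sParetoCdf (z+c) ≤ 0 :=
        mul_nonpos_iff.2 (Or.inr ⟨hA, hB⟩)
      nlinarith [mul_nonneg (neg_nonneg.2 hAB) (sub_nonneg.2 hF)]
    · push_neg at h
      have hA : (0:ℝ) ≤ -(sParetoPdf' (z+c)) := by
        unfold sParetoPdf'
        rw [if_neg (by linarith)]
        have : (0:ℝ) ≤ 3/((z+c)+1)^4 := by positivity
        rw [show (-3:ℝ)/((z+c)+1)^4 = -(3/((z+c)+1)^4) by ring]
        linarith
      have hF : sParetoCdf (-c) ≤ sParetoCdf z := cdf_mono (by linarith)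
      nlinarith [mul_nonneg (mul_nonneg hA hB) (sub_nonneg.2 hF)]
  have hψ : Integrable (fun z : ℝ =>
      (-(sParetoPdf' (z + c))) * sParetoCdf z * sParetoCdf (z + c)) := by
    apply Integrable.mono' ((integrable_inv_one_add_sq.const_mul 3).comp_add_right c)
    · exact (((meas_pdf'.comp (measurable_id.add_const c)).neg.mul meas_cdf).mul
        (meas_cdf.comp (measurable_id.add_const c))).aestronglyMeasurable
    · filter_upwards with z
      rw [Real.norm_eq_abs, abs_mul, abs_mul, abs_neg]
      have h1 := pdf'_abs_le (z + c)
      have h2 : |sParetoCdf z| ≤ 1 := abs_le.2 ⟨by linarith [cdf_nonneg z], cdf_le_one z⟩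
      have h3 : |sParetoCdf (z+c)| ≤ 1 :=
        abs_le.2 ⟨by linarith [cdf_nonneg (z+c)], cdf_le_one (z+c)⟩
      calc |sParetoPdf' (z+c)| * |sParetoCdf z| * |sParetoCdf (z+c)|
          ≤ (3*(1+(z+c)^2)⁻¹) * 1 * 1 := by
            apply mul_le_mul _ h3 (abs_nonneg _) (by positivity)
            exact mul_le_mul h1 h2 (abs_nonneg _) (by positivity)
        _ = 3*(1+(z+c)^2)⁻¹ := by ring
  have hχ : Integrable (fun z : ℝ => sParetoCdf (-c) * phi (z + c)) :=
    (integrable_phi.comp_add_right c).const_mul _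
  calc sParetoCdf (-c) * (∫ z : ℝ, (sParetoPdf z) ^ 2)
      = sParetoCdf (-c) * (2/5) := by rw [integral_pdf_sq]
    _ = sParetoCdf (-c) * ∫ u : ℝ, phi u := by rw [integral_phi]
    _ = sParetoCdf (-c) * ∫ z : ℝ, phi (z + c) := by
        rw [integral_add_right_eq_self phi c]
    _ = ∫ z : ℝ, sParetoCdf (-c) * phi (z + c) := (integral_const_mul _ _).symm
    _ ≤ _ := integral_mono hχ hψ hpt
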